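/- arXiv:2205.03076 — 5 statements merged into one kernel-verified Lean document; each statement's English description precedes it below -/
import Mathlib

section
/- Let L^in, L^out : ℝⁿ × ℝᵐ → ℝ be C¹ with L^in C² in φ, and suppose θ ↦ φ*_θ is a differentiable function on an open set with ∂_φL^in(φ*_θ, θ) = 0 and ∂²_φL^in(φ*_θ, θ) invertible for all θ in that set. Then the total derivative of θ ↦ L^out(φ*_θ, θ) equals ∂_θL^out(φ*_θ, θ) - ∂_φL^out(φ*_θ, θ)·(∂²_φL^in(φ*_θ, θ))⁻¹·∂_θ∂_φL^in(φ*_θ, θ). -/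
/-- The outer gradient formula: if `f = (θ ↦ φ*_θ)` is differentiable with
`∂_φL^in(f θ, θ) = 0` and invertible Hessian on `U`, then the total derivative of
`θ ↦ L^out(φ*_θ, θ)` in the direction `v` equals
`∂_θL^out v + ∂_φL^out w`, where `w = -(∂²_φL^in)⁻¹ ∂_θ∂_φL^in v`
(characterized by `∂²_φL^in w = - ∂_θ∂_φL^in v`). -/
theorem stmt_6 {n m : ℕ}
    (Lin Lout : EuclideanSpace ℝ (Fin n) × EuclideanSpace ℝ (Fin m) → ℝ)
    (hLin : ContDiff ℝ 2 Lin) (hLout : ContDiff ℝ 1 Lout)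
    (U : Set (EuclideanSpace ℝ (Fin m))) (hU : IsOpen U)
    (f : EuclideanSpace ℝ (Fin m) → EuclideanSpace ℝ (Fin n))
    (hf : ∀ θ ∈ U, DifferentiableAt ℝ f θ)
    (hstat : ∀ θ ∈ U, fderiv ℝ (fun ψ => Lin (ψ, θ)) (f θ) = 0)
    (hhess : ∀ θ ∈ U, Function.Bijective
      (fderiv ℝ (fun ψ => fderiv ℝ (fun χ => Lin (χ, θ)) ψ) (f θ))) :
    ∀ θ ∈ U, ∀ v : EuclideanSpace ℝ (Fin m), ∀ w : EuclideanSpace ℝ (Fin n),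
      (fderiv ℝ (fun ψ => fderiv ℝ (fun χ => Lin (χ, θ)) ψ) (f θ)) w
          = - (fderiv ℝ (fun t => fderiv ℝ (fun χ => Lin (χ, t)) (f θ)) θ) v →
      fderiv ℝ (fun t => Lout (f t, t)) θ v
        = (fderiv ℝ (fun t => Lout (f θ, t)) θ) v
          + (fderiv ℝ (fun ψ => Lout (ψ, θ)) (f θ)) w := by
  intro θ hθ v w hw
  have hLin1 : Differentiable ℝ Lin := hLin.differentiable (by norm_num)
  have hF1 : ContDiff ℝ 1 (fderiv ℝ Lin) := hLin.fderiv_right (le_refl _)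
  set F : EuclideanSpace ℝ (Fin n) × EuclideanSpace ℝ (Fin m) →
      (EuclideanSpace ℝ (Fin n) →L[ℝ] ℝ) :=
    fun p => (fderiv ℝ Lin p).comp
      (ContinuousLinearMap.inl ℝ (EuclideanSpace ℝ (Fin n)) (EuclideanSpace ℝ (Fin m)))
    with hFdef
  have hA : ∀ (ψ : EuclideanSpace ℝ (Fin n)) (t : EuclideanSpace ℝ (Fin m)),
      HasFDerivAt (fun χ => Lin (χ, t)) (F (ψ, t)) ψ :=
    fun ψ t => (hLin1 (ψ, t)).hasFDerivAt.comp ψ (hasFDerivAt_prodMk_left ψ t)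
  have FC1 : ContDiff ℝ 1 F := hF1.clm_comp contDiff_const
  have FD : Differentiable ℝ F := FC1.differentiable (by norm_num)
  have hDfU : DifferentiableAt ℝ f θ := hf θ hθ
  set Df := fderiv ℝ f θ with hDfdef
  have hcurve : HasFDerivAt (fun t => (f t, t))
      (Df.prod (ContinuousLinearMap.id ℝ (EuclideanSpace ℝ (Fin m)))) θ :=
    HasFDerivAt.prodMk hDfU.hasFDerivAt (hasFDerivAt_id θ)
  set DF := fderiv ℝ F (f θ, θ) with hDFdef
  -- g(t) = F(f t, t) vanishes on U
  have hg0 : ∀ t ∈ U, F (f t, t) = (0 : EuclideanSpace ℝ (Fin n) →L[ℝ] ℝ) := fun t ht => by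
    rw [← (hA (f t) t).fderiv]; exact hstat t ht
  have hgev : (fun t => F (f t, t)) =ᶠ[nhds θ]
      (fun _ => (0 : EuclideanSpace ℝ (Fin n) →L[ℝ] ℝ)) :=
    Filter.eventuallyEq_of_mem (hU.mem_nhds hθ) hg0
  have hgF : HasFDerivAt (fun t => F (f t, t))
      (DF.comp (Df.prod (ContinuousLinearMap.id ℝ (EuclideanSpace ℝ (Fin m))))) θ := by
    have h := HasFDerivAt.comp (f := fun t => (f t, t)) (g := F) θ (FD (f θ, θ)).hasFDerivAt hcurve
    exact h
  have hzero : DF.comp (Df.prod (ContinuousLinearMap.id ℝ (EuclideanSpace ℝ (Fin m)))) = 0 := by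
    rw [← hgF.fderiv, hgev.fderiv_eq]
    exact fderiv_const_apply _
  have hkey : DF (Df v, v) = 0 := by
    have := congrArg (fun L => L v) hzero
    simpa using this
  -- partial derivatives of F
  have hHψ : HasFDerivAt (fun ψ => F (ψ, θ))
      (DF.comp (ContinuousLinearMap.inl ℝ (EuclideanSpace ℝ (Fin n))
        (EuclideanSpace ℝ (Fin m)))) (f θ) :=
    HasFDerivAt.comp _ (FD _).hasFDerivAt (hasFDerivAt_prodMk_left _ _)
  have hHt : HasFDerivAt (fun t => F (f θ, t))
      (DF.comp (ContinuousLinearMap.inr ℝ (EuclideanSpace ℝ (Fin n))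
        (EuclideanSpace ℝ (Fin m)))) θ :=
    HasFDerivAt.comp _ (FD _).hasFDerivAt (hasFDerivAt_prodMk_right _ _)
  have e1 : (fun ψ => fderiv ℝ (fun χ => Lin (χ, θ)) ψ) = fun ψ => F (ψ, θ) :=
    funext fun ψ => (hA ψ θ).fderiv
  have e2 : (fun t => fderiv ℝ (fun χ => Lin (χ, t)) (f θ)) = fun t => F (f θ, t) :=
    funext fun t => (hA (f θ) t).fderiv
  have eH : fderiv ℝ (fun ψ => fderiv ℝ (fun χ => Lin (χ, θ)) ψ) (f θ)
      = DF.comp (ContinuousLinearMap.inl ℝ (EuclideanSpace ℝ (Fin n))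
        (EuclideanSpace ℝ (Fin m))) := by
    rw [e1]; exact hHψ.fderiv
  have eB : fderiv ℝ (fun t => fderiv ℝ (fun χ => Lin (χ, t)) (f θ)) θ
      = DF.comp (ContinuousLinearMap.inr ℝ (EuclideanSpace ℝ (Fin n))
        (EuclideanSpace ℝ (Fin m))) := by
    rw [e2]; exact hHt.fderiv
  -- hypothesis in terms of DF
  have hw' : DF (w, 0) = - DF (0, v) := by
    rw [eH, eB] at hw
    simpa using hw
  have hwv : DF (w, v) = 0 := by
    have h : ((w, v) : EuclideanSpace ℝ (Fin n) × EuclideanSpace ℝ (Fin m))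
        = (w, 0) + (0, v) := by simp
    rw [h, map_add, hw']
    simp
  have h2 : DF (w, 0) = DF (w, v) - DF (0, v) := by
    rw [← map_sub]; congr 1 <;> simp [Prod.ext_iff]
  have h3 : DF (Df v, 0) = DF (Df v, v) - DF (0, v) := by
    rw [← map_sub]; congr 1 <;> simp [Prod.ext_iff]
  have hinj : Function.Injective
      (fderiv ℝ (fun ψ => fderiv ℝ (fun χ => Lin (χ, θ)) ψ) (f θ)) :=
    (hhess θ hθ).injective
  have hDfvw : Df v = w := by
    apply hinj
    rw [eH]
    simp only [ContinuousLinearMap.comp_apply, ContinuousLinearMap.inl_apply]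
    rw [h3, h2, hkey, hwv]
  -- now the Lout part
  have hLout1 : Differentiable ℝ Lout := hLout.differentiable (by norm_num)
  set DL := fderiv ℝ Lout (f θ, θ) with hDLdef
  have hout : HasFDerivAt (fun t => Lout (f t, t))
      (DL.comp (Df.prod (ContinuousLinearMap.id ℝ (EuclideanSpace ℝ (Fin m))))) θ := by
    have h := HasFDerivAt.comp (f := fun t => (f t, t)) (g := Lout) θ (hLout1 (f θ, θ)).hasFDerivAt hcurve
    exact h
  have houtθ : HasFDerivAt (fun t => Lout (f θ, t))
      (DL.comp (ContinuousLinearMap.inr ℝ (EuclideanSpace ℝ (Fin n))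
        (EuclideanSpace ℝ (Fin m)))) θ :=
    HasFDerivAt.comp _ (hLout1 _).hasFDerivAt (hasFDerivAt_prodMk_right _ _)
  have houtψ : HasFDerivAt (fun ψ => Lout (ψ, θ))
      (DL.comp (ContinuousLinearMap.inl ℝ (EuclideanSpace ℝ (Fin n))
        (EuclideanSpace ℝ (Fin m)))) (f θ) :=
    HasFDerivAt.comp _ (hLout1 _).hasFDerivAt (hasFDerivAt_prodMk_left _ _)
  rw [hout.fderiv, houtθ.fderiv, houtψ.fderiv]
  simp only [ContinuousLinearMap.comp_apply, ContinuousLinearMap.prod_apply,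
    ContinuousLinearMap.coe_id', id_eq, ContinuousLinearMap.inl_apply,
    ContinuousLinearMap.inr_apply, hDfvw]
  rw [← map_add]
  congr 1
  simp
end

section
/- Let L^in, L^out : ℝⁿ × ℝᵐ → ℝ be twice continuously differentiable, and define the augmented loss 𝓛(φ, θ, β) = L^in(φ, θ) + β·L^out(φ, θ). Let φ̄ satisfy ∂_φ𝓛(φ̄, θ̄, β̄) = 0 with ∂²_φ𝓛(φ̄, θ̄, β̄) invertible. Then there is a neighborhood of (θ̄, β̄) and a C¹ function (θ, β) ↦ φ*_{θ,β} with φ*_{θ̄,β̄} = φ̄ and ∂_φ𝓛(φ*_{θ,β}, θ, β) = 0 on this neighborhood, such that d_θ [∂_β𝓛(φ*_{θ,β}, θ, β)] = (d_β [∂_θ𝓛(φ*_{θ,β}, θ, β)])ᵀ on this neighborhood. -/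
open ContinuousLinearMap

variable {n m : ℕ}

def EPLoss (Lin Lout : EuclideanSpace ℝ (Fin n) × EuclideanSpace ℝ (Fin m) → ℝ) :
    EuclideanSpace ℝ (Fin n) × (EuclideanSpace ℝ (Fin m) × ℝ) → ℝ :=
  fun x => Lin (x.1, x.2.1) + x.2.2 * Lout (x.1, x.2.1)

variable {Lin Lout : EuclideanSpace ℝ (Fin n) × EuclideanSpace ℝ (Fin m) → ℝ}

theorem EPLoss_contDiff (hLin : ContDiff ℝ 2 Lin) (hLout : ContDiff ℝ 2 Lout) :
    ContDiff ℝ 2 (EPLoss Lin Lout) := by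
  unfold EPLoss
  exact (hLin.comp (contDiff_fst.prodMk contDiff_snd.fst)).add
    ((contDiff_snd.snd).mul (hLout.comp (contDiff_fst.prodMk contDiff_snd.fst)))

theorem EPLoss_hasFDerivAt_fst (h : Differentiable ℝ (EPLoss Lin Lout))
    (ψ : EuclideanSpace ℝ (Fin n)) (q : EuclideanSpace ℝ (Fin m) × ℝ) :
    HasFDerivAt (fun χ => EPLoss Lin Lout (χ, q))
      ((fderiv ℝ (EPLoss Lin Lout) (ψ, q)).comp
        (ContinuousLinearMap.inl ℝ (EuclideanSpace ℝ (Fin n)) (EuclideanSpace ℝ (Fin m) × ℝ))) ψ :=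
  HasFDerivAt.comp (g := EPLoss Lin Lout) ψ (h (ψ, q)).hasFDerivAt (hasFDerivAt_prodMk_left ψ q)

theorem EPLoss_deriv_beta (h : Differentiable ℝ (EPLoss Lin Lout))
    (x : EuclideanSpace ℝ (Fin n) × (EuclideanSpace ℝ (Fin m) × ℝ)) :
    fderiv ℝ (EPLoss Lin Lout) x (0, (0, 1)) = Lout (x.1, x.2.1) := by
  have h1 : HasDerivAt (fun b => EPLoss Lin Lout (x.1, (x.2.1, b)))
      (fderiv ℝ (EPLoss Lin Lout) x (0, (0, 1))) x.2.2 :=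
    (h x).hasFDerivAt.comp_hasDerivAt (l := EPLoss Lin Lout) x.2.2
      ((hasDerivAt_const x.2.2 x.1).prodMk ((hasDerivAt_const x.2.2 x.2.1).prodMk (hasDerivAt_id x.2.2)))
  have h2 : HasDerivAt (fun b => EPLoss Lin Lout (x.1, (x.2.1, b)))
      (Lout (x.1, x.2.1)) x.2.2 := by
    have : HasDerivAt (fun b : ℝ => Lin (x.1, x.2.1) + b * Lout (x.1, x.2.1))
        (Lout (x.1, x.2.1)) x.2.2 :=
      (hasDerivAt_mul_const (Lout (x.1, x.2.1))).const_add (Lin (x.1, x.2.1))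
    exact this
  exact h1.unique h2

set_option maxHeartbeats 1000000 in
/-- Equilibrium propagation theorem (Scellier & Bengio): for the augmented loss
`𝓛(φ, θ, β) = L^in(φ, θ) + β L^out(φ, θ)`, if `φ̄` is a stationary point of
`𝓛(·, θ̄, β̄)` with invertible Hessian, then near `(θ̄, β̄)` there is a C¹ implicit
stationary-point function `(θ, β) ↦ φ*_{θ,β}` along which
`d_θ[∂_β𝓛(φ*_{θ,β}, θ, β)] = (d_β[∂_θ𝓛(φ*_{θ,β}, θ, β)])ᵀ`. -/
theorem stmt_7 {n m : ℕ}
    (Lin Lout : EuclideanSpace ℝ (Fin n) × EuclideanSpace ℝ (Fin m) → ℝ)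
    (hLin : ContDiff ℝ 2 Lin) (hLout : ContDiff ℝ 2 Lout)
    (φb : EuclideanSpace ℝ (Fin n)) (θb : EuclideanSpace ℝ (Fin m)) (βb : ℝ)
    (hstat : fderiv ℝ (fun ψ => Lin (ψ, θb) + βb * Lout (ψ, θb)) φb = 0)
    (hhess : Function.Bijective
      (fderiv ℝ (fun ψ => fderiv ℝ (fun χ => Lin (χ, θb) + βb * Lout (χ, θb)) ψ) φb)) :
    ∃ W : Set (EuclideanSpace ℝ (Fin m) × ℝ), IsOpen W ∧ (θb, βb) ∈ W ∧
      ∃ f : EuclideanSpace ℝ (Fin m) × ℝ → EuclideanSpace ℝ (Fin n),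
        ContDiffOn ℝ 1 f W ∧ f (θb, βb) = φb ∧
        (∀ p ∈ W, fderiv ℝ (fun ψ => Lin (ψ, p.1) + p.2 * Lout (ψ, p.1)) (f p) = 0) ∧
        ∀ p ∈ W,
          fderiv ℝ (fun t => Lout (f (t, p.2), t)) p.1
            = deriv (fun b =>
                fderiv ℝ (fun t => Lin (f (p.1, b), t) + b * Lout (f (p.1, b), t)) p.1) p.2 := by
  have hL : ContDiff ℝ 2 (EPLoss Lin Lout) := EPLoss_contDiff hLin hLout
  have hLdiff : Differentiable ℝ (EPLoss Lin Lout) := hL.differentiable two_ne_zero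
  set D := fderiv ℝ (EPLoss Lin Lout) with hD_def
  have hD : ContDiff ℝ 1 D := hL.fderiv_right (by norm_num)
  -- the stationarity map `g`
  set g : (EuclideanSpace ℝ (Fin m) × ℝ) × EuclideanSpace ℝ (Fin n) →
      (EuclideanSpace ℝ (Fin n) →L[ℝ] ℝ) :=
    fun x => fderiv ℝ (fun χ => EPLoss Lin Lout (χ, x.1)) x.2 with hg_def
  have hg : ContDiff ℝ 1 g := by
    apply ContDiff.fderiv
      (f := fun (x : (EuclideanSpace ℝ (Fin m) × ℝ) × EuclideanSpace ℝ (Fin n))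
        (χ : EuclideanSpace ℝ (Fin n)) => EPLoss Lin Lout (χ, x.1))
      (g := fun x => x.2) ?_ contDiff_snd (le_refl 2)
    exact hL.comp (contDiff_snd.prodMk contDiff_fst.fst)
  have hg_eq : ∀ x, g x = (D (x.2, x.1)).comp
      (ContinuousLinearMap.inl ℝ (EuclideanSpace ℝ (Fin n)) (EuclideanSpace ℝ (Fin m) × ℝ)) :=
    fun x => (EPLoss_hasFDerivAt_fst hLdiff x.2 x.1).fderiv
  set x₀ : (EuclideanSpace ℝ (Fin m) × ℝ) × EuclideanSpace ℝ (Fin n) := ((θb, βb), φb)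
    with hx₀_def
  have hgx₀ : g x₀ = 0 := hstat
  set Φ : (EuclideanSpace ℝ (Fin m) × ℝ) × EuclideanSpace ℝ (Fin n) →
      (EuclideanSpace ℝ (Fin m) × ℝ) × (EuclideanSpace ℝ (Fin n) →L[ℝ] ℝ) :=
    fun x => (x.1, g x) with hΦ_def
  have hΦ : ContDiff ℝ 1 Φ := contDiff_fst.prodMk hg
  set A := fderiv ℝ g x₀ with hA_def
  have hgdA : HasFDerivAt g A x₀ := (hg.differentiable one_ne_zero x₀).hasFDerivAt
  have hH : fderiv ℝ (fun ψ => g ((θb, βb), ψ)) φb = A.comp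
      (ContinuousLinearMap.inr ℝ (EuclideanSpace ℝ (Fin m) × ℝ) (EuclideanSpace ℝ (Fin n))) :=
    (hgdA.comp φb (hasFDerivAt_prodMk_right (θb, βb) φb)).fderiv
  have hhess' : Function.Bijective (A.comp
      (ContinuousLinearMap.inr ℝ (EuclideanSpace ℝ (Fin m) × ℝ) (EuclideanSpace ℝ (Fin n)))) := by
    rw [← hH]; exact hhess
  set Φ' := (ContinuousLinearMap.fst ℝ (EuclideanSpace ℝ (Fin m) × ℝ)
      (EuclideanSpace ℝ (Fin n))).prod A with hΦ'_def
  have hΦ'd : HasFDerivAt Φ Φ' x₀ := (hasFDerivAt_fst).prodMk hgdA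
  have hbij : Function.Bijective Φ' := by
    constructor
    · intro u v huv
      have h1 : u.1 = v.1 := (Prod.ext_iff.mp huv).1
      have h2 : A u = A v := (Prod.ext_iff.mp huv).2
      have h3 : A (u - v) = 0 := by rw [map_sub, h2, sub_self]
      have h4 : u - v = ((0 : EuclideanSpace ℝ (Fin m) × ℝ), u.2 - v.2) := by
        ext <;> simp [h1]
      have h5 : (A.comp (ContinuousLinearMap.inr ℝ (EuclideanSpace ℝ (Fin m) × ℝ)
          (EuclideanSpace ℝ (Fin n)))) (u.2 - v.2) = 0 := by
        simpa [h4] using h3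
      have h6 : u.2 - v.2 = 0 := by
        have := hhess'.injective (a₁ := u.2 - v.2) (a₂ := 0) (by rw [h5, map_zero])
        exact this
      have h7 : u.2 = v.2 := by rwa [sub_eq_zero] at h6
      exact Prod.ext h1 h7
    · rintro ⟨q, y⟩
      obtain ⟨ψ, hψ⟩ := hhess'.surjective (y - A (q, 0))
      refine ⟨(q, ψ), ?_⟩
      have : A (q, ψ) = A (q, 0) + A (0, ψ) := by
        rw [← map_add]; congr 1; simp
      have hAy : A (q, ψ) = y := by
        simp only [comp_apply, inr_apply] at hψ
        rw [this, hψ]; abel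
      exact Prod.ext rfl hAy
  -- upgrade to a continuous linear equivalence (finite dimensions)
  let Φ'e : ((EuclideanSpace ℝ (Fin m) × ℝ) × EuclideanSpace ℝ (Fin n)) ≃L[ℝ]
      ((EuclideanSpace ℝ (Fin m) × ℝ) × (EuclideanSpace ℝ (Fin n) →L[ℝ] ℝ)) :=
    LinearEquiv.toContinuousLinearEquiv (LinearEquiv.ofBijective Φ'.toLinearMap hbij)
  have hcoe : (Φ'e : ((EuclideanSpace ℝ (Fin m) × ℝ) × EuclideanSpace ℝ (Fin n)) →L[ℝ]
      ((EuclideanSpace ℝ (Fin m) × ℝ) × (EuclideanSpace ℝ (Fin n) →L[ℝ] ℝ))) = Φ' :=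
    ContinuousLinearMap.ext fun x => rfl
  have hΦ'e : HasFDerivAt Φ (Φ'e : ((EuclideanSpace ℝ (Fin m) × ℝ) × EuclideanSpace ℝ (Fin n)) →L[ℝ]
      ((EuclideanSpace ℝ (Fin m) × ℝ) × (EuclideanSpace ℝ (Fin n) →L[ℝ] ℝ))) x₀ := by
    rw [hcoe]; exact hΦ'd
  have hΦat : ContDiffAt ℝ 1 Φ x₀ := hΦ.contDiffAt
  set inv := hΦat.localInverse hΦ'e one_ne_zero with hinv_def
  have hinv_cd : ContDiffAt ℝ 1 inv (Φ x₀) := hΦat.to_localInverse hΦ'e one_ne_zero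
  have hstrict := hΦat.hasStrictFDerivAt' hΦ'e one_ne_zero
  have hright : ∀ᶠ y in nhds (Φ x₀), Φ (inv y) = y := hstrict.eventually_right_inverse
  have hleftpt : inv (Φ x₀) = x₀ := hstrict.localInverse_apply_image
  have hΦx₀ : Φ x₀ = ((θb, βb), 0) := by
    show (x₀.1, g x₀) = ((θb, βb), 0)
    rw [hgx₀]
  -- the implicit function
  set f : EuclideanSpace ℝ (Fin m) × ℝ → EuclideanSpace ℝ (Fin n) :=
    fun p => (inv (p, 0)).2 with hf_def
  have hfb : f (θb, βb) = φb := by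
    show (inv ((θb, βb), 0)).2 = φb
    rw [← hΦx₀, hleftpt]
  have hf_cd : ContDiffAt ℝ 1 f (θb, βb) := by
    have h1 : ContDiffAt ℝ 1 inv ((θb, βb), 0) := by rw [← hΦx₀]; exact hinv_cd
    have h2 : ContDiffAt ℝ 1 (inv ∘ fun p : EuclideanSpace ℝ (Fin m) × ℝ =>
        (p, (0 : EuclideanSpace ℝ (Fin n) →L[ℝ] ℝ))) (θb, βb) :=
      ContDiffAt.comp _ h1 (contDiffAt_id.prodMk contDiffAt_const)
    have h3 : ContDiffAt ℝ 1 (Prod.snd ∘ (inv ∘ fun p : EuclideanSpace ℝ (Fin m) × ℝ =>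
        (p, (0 : EuclideanSpace ℝ (Fin n) →L[ℝ] ℝ)))) (θb, βb) :=
      ContDiffAt.comp _ contDiffAt_snd h2
    exact h3
  have hev : ∀ᶠ p in nhds (θb, βb), Φ (inv (p, 0)) = (p, 0) := by
    have hcont : ContinuousAt (fun p : EuclideanSpace ℝ (Fin m) × ℝ =>
        (p, (0 : EuclideanSpace ℝ (Fin n) →L[ℝ] ℝ))) (θb, βb) :=
      (continuous_id.prodMk continuous_const).continuousAt
    have h := hright
    rw [hΦx₀] at h
    exact hcont.eventually h
  have hev2 : ∀ᶠ p in nhds (θb, βb), g (p, f p) = 0 := by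
    refine hev.mono fun p hp => ?_
    have h1 : (inv (p, 0)).1 = p := (Prod.ext_iff.mp hp).1
    have h2 : g (inv (p, 0)) = 0 := (Prod.ext_iff.mp hp).2
    calc g (p, f p) = g ((inv (p, 0)).1, (inv (p, 0)).2) := by rw [h1]
    _ = g (inv (p, 0)) := rfl
    _ = 0 := h2
  obtain ⟨u, hu_mem, hu⟩ := hf_cd.contDiffOn le_rfl (by simp)
  obtain ⟨T, hT_mem, hT⟩ := hev2.exists_mem
  refine ⟨interior (u ∩ T), isOpen_interior, ?_, f, ?_, hfb, ?_, ?_⟩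
  · rw [mem_interior_iff_mem_nhds]
    exact Filter.inter_mem hu_mem hT_mem
  · exact hu.mono (interior_subset.trans Set.inter_subset_left)
  · intro p hp
    exact hT p (interior_subset hp).2
  · intro p hp
    have hW_open : IsOpen (interior (u ∩ T)) := isOpen_interior
    have hfW : ContDiffOn ℝ 1 f (interior (u ∩ T)) :=
      hu.mono (interior_subset.trans Set.inter_subset_left)
    have hg0 : ∀ q ∈ interior (u ∩ T), g (q, f q) = 0 := fun q hq => hT q (interior_subset hq).2
    have hdiff_f : ∀ q ∈ interior (u ∩ T), DifferentiableAt ℝ f q := fun q hq =>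
      (hfW.differentiableOn one_ne_zero q hq).differentiableAt (hW_open.mem_nhds hq)
    set F' : (EuclideanSpace ℝ (Fin m) × ℝ) → ((EuclideanSpace ℝ (Fin m) × ℝ) →L[ℝ] ℝ) :=
      fun q => (D (f q, q)).comp
        (ContinuousLinearMap.inr ℝ (EuclideanSpace ℝ (Fin n)) (EuclideanSpace ℝ (Fin m) × ℝ))
      with hF'_def
    have key1 : ∀ q ∈ interior (u ∩ T),
        HasFDerivAt (fun q' => EPLoss Lin Lout (f q', q')) (F' q) q := by
      intro q hq
      have hfd := hdiff_f q hq
      have h1 : HasFDerivAt (fun q' : EuclideanSpace ℝ (Fin m) × ℝ => (f q', q'))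
          ((fderiv ℝ f q).prod (ContinuousLinearMap.id ℝ _)) q :=
        hfd.hasFDerivAt.prodMk (hasFDerivAt_id q)
      have h2 : HasFDerivAt (fun q' => EPLoss Lin Lout (f q', q'))
          ((D (f q, q)).comp ((fderiv ℝ f q).prod (ContinuousLinearMap.id ℝ _))) q :=
        HasFDerivAt.comp (g := EPLoss Lin Lout)
          (f := fun q' : EuclideanSpace ℝ (Fin m) × ℝ => (f q', q'))
          q (hLdiff (f q, q)).hasFDerivAt h1
      have hzero : (D (f q, q)).comp (ContinuousLinearMap.inl ℝ (EuclideanSpace ℝ (Fin n))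
          (EuclideanSpace ℝ (Fin m) × ℝ)) = 0 := by
        rw [← hg_eq (q, f q)]; exact hg0 q hq
      convert h2 using 1
      apply ContinuousLinearMap.ext; intro v
      have h0 : D (f q, q) (fderiv ℝ f q v, 0) = 0 := by
        simpa using ContinuousLinearMap.ext_iff.mp hzero (fderiv ℝ f q v)
      have hv : (fderiv ℝ f q v, v) = (fderiv ℝ f q v, (0 : EuclideanSpace ℝ (Fin m) × ℝ))
          + ((0 : EuclideanSpace ℝ (Fin n)), v) := by simp
      simp only [comp_apply, inr_apply, prod_apply, coe_id', id_eq]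
      rw [hv, map_add, h0, zero_add]
      rfl
    have hF'W : ContDiffOn ℝ 1 F' (interior (u ∩ T)) :=
      (hD.comp_contDiffOn (hfW.prodMk contDiffOn_id)).clm_comp contDiffOn_const
    have hF''d : HasFDerivAt F' (fderiv ℝ F' p) p :=
      ((hF'W.differentiableOn one_ne_zero p hp).differentiableAt (hW_open.mem_nhds hp)).hasFDerivAt
    set F'' := fderiv ℝ F' p with hF''_def
    have hsym : ∀ v w, F'' v w = F'' w v := fun v w =>
      second_derivative_symmetric_of_eventually
        (Filter.eventually_of_mem (hW_open.mem_nhds hp) key1) hF''d v w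
    -- rewrite the left-hand side
    have hB : ∀ q : EuclideanSpace ℝ (Fin m) × ℝ, F' q (0, 1) = Lout (f q, q.1) := fun q =>
      EPLoss_deriv_beta hLdiff (f q, q)
    have hfunLHS : (fun t => Lout (f (t, p.2), t)) = fun t => F' (t, p.2) ((0, 1) :
        EuclideanSpace ℝ (Fin m) × ℝ) := funext fun t => (hB (t, p.2)).symm
    rw [hfunLHS]
    have hC : HasFDerivAt (fun t => F' (t, p.2))
        (F''.comp (ContinuousLinearMap.inl ℝ (EuclideanSpace ℝ (Fin m)) ℝ)) p.1 :=
      HasFDerivAt.comp (g := F') p.1 hF''d (hasFDerivAt_prodMk_left p.1 p.2)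
    have hC2 : HasFDerivAt (fun t => F' (t, p.2) ((0, 1) : EuclideanSpace ℝ (Fin m) × ℝ))
        ((ContinuousLinearMap.apply ℝ ℝ ((0, 1) : EuclideanSpace ℝ (Fin m) × ℝ)).comp
          (F''.comp (ContinuousLinearMap.inl ℝ (EuclideanSpace ℝ (Fin m)) ℝ))) p.1 :=
      HasFDerivAt.comp p.1
        (ContinuousLinearMap.apply ℝ ℝ ((0, 1) : EuclideanSpace ℝ (Fin m) × ℝ)).hasFDerivAt hC
    rw [hC2.fderiv]
    -- rewrite the right-hand side
    have hinner : (fun b => fderiv ℝ (fun t => Lin (f (p.1, b), t) + b * Lout (f (p.1, b), t)) p.1)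
        = fun b => (F' (p.1, b)).comp (ContinuousLinearMap.inl ℝ (EuclideanSpace ℝ (Fin m)) ℝ) := by
      funext b
      have hfd : HasFDerivAt (fun t => Lin (f (p.1, b), t) + b * Lout (f (p.1, b), t))
          ((F' (p.1, b)).comp (ContinuousLinearMap.inl ℝ (EuclideanSpace ℝ (Fin m)) ℝ)) p.1 := by
        have h3 : HasFDerivAt (fun t => EPLoss Lin Lout (f (p.1, b), (t, b)))
            ((D (f (p.1, b), (p.1, b))).comp
              (((0 : EuclideanSpace ℝ (Fin m) →L[ℝ] EuclideanSpace ℝ (Fin n))).prod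
                ((ContinuousLinearMap.id ℝ (EuclideanSpace ℝ (Fin m))).prod 0))) p.1 :=
          HasFDerivAt.comp p.1 (hLdiff _).hasFDerivAt
            ((hasFDerivAt_const (f (p.1, b)) p.1).prodMk
              ((hasFDerivAt_id p.1).prodMk (hasFDerivAt_const b p.1)))
        convert h3 using 1
        · rfl
        · apply ContinuousLinearMap.ext; intro v; rfl
      exact hfd.fderiv
    rw [hinner]
    have hD2 : HasDerivAt (fun b => F' (p.1, b))
        (F'' ((0, 1) : EuclideanSpace ℝ (Fin m) × ℝ)) p.2 :=
      hF''d.comp_hasDerivAt (l := F') p.2 ((hasDerivAt_const p.2 p.1).prodMk (hasDerivAt_id p.2))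
    set M := (ContinuousLinearMap.compL ℝ (EuclideanSpace ℝ (Fin m))
        (EuclideanSpace ℝ (Fin m) × ℝ) ℝ).flip
        (ContinuousLinearMap.inl ℝ (EuclideanSpace ℝ (Fin m)) ℝ) with hM_def
    have hD3 : HasDerivAt (fun b => (F' (p.1, b)).comp
        (ContinuousLinearMap.inl ℝ (EuclideanSpace ℝ (Fin m)) ℝ))
        (M (F'' ((0, 1) : EuclideanSpace ℝ (Fin m) × ℝ))) p.2 :=
      M.hasFDerivAt.comp_hasDerivAt p.2 hD2
    rw [hD3.deriv]
    apply ContinuousLinearMap.ext; intro v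
    simp only [hM_def, ContinuousLinearMap.flip_apply, ContinuousLinearMap.compL_apply,
      comp_apply, inl_apply, ContinuousLinearMap.apply_apply]
    exact hsym (v, 0) (0, 1)
end

section
/- Under the equilibrium propagation setting with 𝓛(φ, θ, β) = L^in(φ, θ) + β·L^out(φ, θ), where (θ, β) ↦ φ*_{θ,β} is the C¹ implicit stationary-point function defined near β = 0 with φ*_{θ,0} = φ*_θ, the outer gradient satisfies ∇_θ = d/dθ [L^out(φ*_θ, θ)] = d/dβ [∂_θ𝓛(φ*_{θ,β}, θ, β)]ᵀ evaluated at β = 0. -/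
set_option maxHeartbeats 1000000

open ContinuousLinearMap

/-- Equilibrium propagation form of the outer gradient: with
`𝓛(φ, θ, β) = L^in(φ, θ) + β L^out(φ, θ)` and `(θ, β) ↦ φ*_{θ,β}` the C¹ implicit
stationary-point function (with invertible Hessians) defined near `β = 0`, the outer
gradient satisfies `∇_θ = d_θ[L^out(φ*_{θ,0}, θ)] = d_β[∂_θ𝓛(φ*_{θ,β}, θ, β)]ᵀ |_{β=0}`. -/
theorem stmt_8 {n m : ℕ}
    (Lin Lout : EuclideanSpace ℝ (Fin n) × EuclideanSpace ℝ (Fin m) → ℝ)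
    (hLin : ContDiff ℝ 2 Lin) (hLout : ContDiff ℝ 2 Lout)
    (W : Set (EuclideanSpace ℝ (Fin m) × ℝ)) (hW : IsOpen W)
    (f : EuclideanSpace ℝ (Fin m) × ℝ → EuclideanSpace ℝ (Fin n))
    (hf : ContDiffOn ℝ 1 f W)
    (hstat : ∀ p ∈ W, fderiv ℝ (fun ψ => Lin (ψ, p.1) + p.2 * Lout (ψ, p.1)) (f p) = 0)
    (hhess : ∀ p ∈ W, Function.Bijective
      (fderiv ℝ (fun ψ => fderiv ℝ (fun χ => Lin (χ, p.1) + p.2 * Lout (χ, p.1)) ψ) (f p)))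
    (θ : EuclideanSpace ℝ (Fin m)) (hθ : (θ, (0 : ℝ)) ∈ W) :
    fderiv ℝ (fun t => Lout (f (t, (0 : ℝ)), t)) θ
      = deriv (fun b =>
          fderiv ℝ (fun t => Lin (f (θ, b), t) + b * Lout (f (θ, b), t)) θ) 0 := by
  classical
  have hLin1 : Differentiable ℝ Lin := hLin.differentiable (by norm_num)
  have hLout1 : Differentiable ℝ Lout := hLout.differentiable (by norm_num)
  have hLin2 : Differentiable ℝ (fderiv ℝ Lin) :=
    (hLin.fderiv_right (by norm_num) : ContDiff ℝ 1 (fderiv ℝ Lin)).differentiable (by norm_num)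
  have hLout2 : Differentiable ℝ (fderiv ℝ Lout) :=
    (hLout.fderiv_right (by norm_num) : ContDiff ℝ 1 (fderiv ℝ Lout)).differentiable (by norm_num)
  have hWn : W ∈ nhds ((θ, (0:ℝ)) : (EuclideanSpace ℝ (Fin m)) × ℝ) := hW.mem_nhds hθ
  have hfd : DifferentiableAt ℝ f (θ, (0:ℝ)) :=
    (hf.differentiableOn (by norm_num)).differentiableAt hWn
  set Df : ((EuclideanSpace ℝ (Fin m)) × ℝ) →L[ℝ] (EuclideanSpace ℝ (Fin n)) := fderiv ℝ f (θ, (0:ℝ)) with hDf_def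
  have hDf : HasFDerivAt f Df (θ, (0:ℝ)) := hfd.hasFDerivAt
  set z₀ : (EuclideanSpace ℝ (Fin n)) × (EuclideanSpace ℝ (Fin m)) := (f (θ, (0:ℝ)), θ) with hz₀_def
  set S : ((EuclideanSpace ℝ (Fin n)) × (EuclideanSpace ℝ (Fin m))) →L[ℝ] (((EuclideanSpace ℝ (Fin n)) × (EuclideanSpace ℝ (Fin m))) →L[ℝ] ℝ) := fderiv ℝ (fderiv ℝ Lin) z₀ with hS_def
  set T : ((EuclideanSpace ℝ (Fin n)) × (EuclideanSpace ℝ (Fin m))) →L[ℝ] ℝ := fderiv ℝ Lout z₀ with hT_def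
  set db : (EuclideanSpace ℝ (Fin n)) := Df ((0:(EuclideanSpace ℝ (Fin m))), (1:ℝ)) with hdb_def
  -- Step 1: the stationarity identity in global-derivative form, on W
  have hKz : ∀ p ∈ W, ((fderiv ℝ Lin (f p, p.1)) + p.2 • (fderiv ℝ Lout (f p, p.1))).comp
      (ContinuousLinearMap.inl ℝ (EuclideanSpace ℝ (Fin n)) (EuclideanSpace ℝ (Fin m))) = 0 := by
    intro p hp
    have ha : HasFDerivAt (fun ψ : (EuclideanSpace ℝ (Fin n)) => Lin (ψ, p.1))
        ((fderiv ℝ Lin (f p, p.1)).comp (ContinuousLinearMap.inl ℝ (EuclideanSpace ℝ (Fin n)) (EuclideanSpace ℝ (Fin m)))) (f p) :=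
      (hLin1 (f p, p.1)).hasFDerivAt.comp (f p) (hasFDerivAt_prodMk_left (f p) p.1)
    have hb : HasFDerivAt (fun ψ : (EuclideanSpace ℝ (Fin n)) => Lout (ψ, p.1))
        ((fderiv ℝ Lout (f p, p.1)).comp (ContinuousLinearMap.inl ℝ (EuclideanSpace ℝ (Fin n)) (EuclideanSpace ℝ (Fin m)))) (f p) :=
      (hLout1 (f p, p.1)).hasFDerivAt.comp (f p) (hasFDerivAt_prodMk_left (f p) p.1)
    have h1 : HasFDerivAt (fun ψ : (EuclideanSpace ℝ (Fin n)) => Lin (ψ, p.1) + p.2 * Lout (ψ, p.1))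
        (((fderiv ℝ Lin (f p, p.1)) + p.2 • (fderiv ℝ Lout (f p, p.1))).comp
          (ContinuousLinearMap.inl ℝ (EuclideanSpace ℝ (Fin n)) (EuclideanSpace ℝ (Fin m)))) (f p) := by
      have := ha.add (hb.const_mul p.2)
      rw [ContinuousLinearMap.add_comp, ContinuousLinearMap.smul_comp]
      exact this
    rw [← h1.fderiv]
    exact hstat p hp
  -- Step 2: differentiate it at (θ, 0)
  set Rcomp : (((EuclideanSpace ℝ (Fin n)) × (EuclideanSpace ℝ (Fin m))) →L[ℝ] ℝ) →L[ℝ] ((EuclideanSpace ℝ (Fin n)) →L[ℝ] ℝ) :=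
    (ContinuousLinearMap.compL ℝ (EuclideanSpace ℝ (Fin n)) ((EuclideanSpace ℝ (Fin n)) × (EuclideanSpace ℝ (Fin m))) ℝ).flip (ContinuousLinearMap.inl ℝ (EuclideanSpace ℝ (Fin n)) (EuclideanSpace ℝ (Fin m))) with hR_def
  set Dg : ((EuclideanSpace ℝ (Fin m)) × ℝ) →L[ℝ] ((EuclideanSpace ℝ (Fin n)) × (EuclideanSpace ℝ (Fin m))) := Df.prod (ContinuousLinearMap.fst ℝ (EuclideanSpace ℝ (Fin m)) ℝ) with hDg_def
  have hg : HasFDerivAt (fun p : (EuclideanSpace ℝ (Fin m)) × ℝ => ((f p, p.1) : (EuclideanSpace ℝ (Fin n)) × (EuclideanSpace ℝ (Fin m)))) Dg (θ, (0:ℝ)) :=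
    hDf.prodMk hasFDerivAt_fst
  have hM1 : HasFDerivAt (fun p : (EuclideanSpace ℝ (Fin m)) × ℝ => fderiv ℝ Lin (f p, p.1)) (S.comp Dg) (θ, (0:ℝ)) :=
    (hLin2 z₀).hasFDerivAt.comp (θ, (0:ℝ)) hg
  have hM2 : HasFDerivAt (fun p : (EuclideanSpace ℝ (Fin m)) × ℝ => p.2 • fderiv ℝ Lout (f p, p.1))
      ((ContinuousLinearMap.snd ℝ (EuclideanSpace ℝ (Fin m)) ℝ).smulRight T) (θ, (0:ℝ)) := by
    have hc : HasFDerivAt (fun p : (EuclideanSpace ℝ (Fin m)) × ℝ => p.2) (ContinuousLinearMap.snd ℝ (EuclideanSpace ℝ (Fin m)) ℝ) (θ, (0:ℝ)) :=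
      hasFDerivAt_snd
    have hX : HasFDerivAt (fun p : (EuclideanSpace ℝ (Fin m)) × ℝ => fderiv ℝ Lout (f p, p.1))
        ((fderiv ℝ (fderiv ℝ Lout) z₀).comp Dg) (θ, (0:ℝ)) :=
      (hLout2 z₀).hasFDerivAt.comp (θ, (0:ℝ)) hg
    have := hc.smul hX
    simp at this; exact this
  have hM : HasFDerivAt
      (fun p : (EuclideanSpace ℝ (Fin m)) × ℝ => fderiv ℝ Lin (f p, p.1) + p.2 • fderiv ℝ Lout (f p, p.1))
      (S.comp Dg + (ContinuousLinearMap.snd ℝ (EuclideanSpace ℝ (Fin m)) ℝ).smulRight T) (θ, (0:ℝ)) := hM1.add hM2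
  have hK : HasFDerivAt
      (fun p : (EuclideanSpace ℝ (Fin m)) × ℝ => ((fderiv ℝ Lin (f p, p.1)) + p.2 • (fderiv ℝ Lout (f p, p.1))).comp
        (ContinuousLinearMap.inl ℝ (EuclideanSpace ℝ (Fin n)) (EuclideanSpace ℝ (Fin m))))
      (Rcomp.comp (S.comp Dg + (ContinuousLinearMap.snd ℝ (EuclideanSpace ℝ (Fin m)) ℝ).smulRight T)) (θ, (0:ℝ)) := by
    have := Rcomp.hasFDerivAt.comp (θ, (0:ℝ)) hM
    convert this using 2
    all_goals rfl
  have hzero : Rcomp.comp (S.comp Dg + (ContinuousLinearMap.snd ℝ (EuclideanSpace ℝ (Fin m)) ℝ).smulRight T) = 0 := by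
    rw [← hK.fderiv]
    have hev : (fun p : (EuclideanSpace ℝ (Fin m)) × ℝ => ((fderiv ℝ Lin (f p, p.1)) +
        p.2 • (fderiv ℝ Lout (f p, p.1))).comp (ContinuousLinearMap.inl ℝ (EuclideanSpace ℝ (Fin n)) (EuclideanSpace ℝ (Fin m))))
        =ᶠ[nhds ((θ, (0:ℝ)) : (EuclideanSpace ℝ (Fin m)) × ℝ)] (fun _ => (0 : (EuclideanSpace ℝ (Fin n)) →L[ℝ] ℝ)) := by
      filter_upwards [hWn] with p hp using hKz p hp
    rw [hev.fderiv_eq]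
    exact fderiv_const_apply 0
  -- Key pointwise identity
  have star : ∀ (u : (EuclideanSpace ℝ (Fin m)) × ℝ) (v : (EuclideanSpace ℝ (Fin n))),
      S (Df u, u.1) (v, (0:(EuclideanSpace ℝ (Fin m)))) + u.2 * T (v, (0:(EuclideanSpace ℝ (Fin m)))) = 0 := by
    intro u v
    have h := DFunLike.congr_fun (DFunLike.congr_fun hzero u) v
    simpa [Rcomp, Dg, ContinuousLinearMap.smulRight_apply, smul_eq_mul,
      ContinuousLinearMap.flip_apply] using h
  -- Symmetry of the second derivative of Lin
  have hsymm : ∀ v w : (EuclideanSpace ℝ (Fin n)) × (EuclideanSpace ℝ (Fin m)), S v w = S w v :=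
    second_derivative_symmetric (fun y => (hLin1 y).hasFDerivAt) (hLin2 z₀).hasFDerivAt
  -- LHS computation
  have hL : HasFDerivAt (fun t : (EuclideanSpace ℝ (Fin m)) => Lout (f (t, (0:ℝ)), t))
      (T.comp ((Df.comp (ContinuousLinearMap.inl ℝ (EuclideanSpace ℝ (Fin m)) ℝ)).prod (ContinuousLinearMap.id ℝ (EuclideanSpace ℝ (Fin m))))) θ := by
    have hf1 : HasFDerivAt (fun t : (EuclideanSpace ℝ (Fin m)) => f (t, (0:ℝ)))
        (Df.comp (ContinuousLinearMap.inl ℝ (EuclideanSpace ℝ (Fin m)) ℝ)) θ :=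
      hDf.comp θ (hasFDerivAt_prodMk_left θ (0:ℝ))
    have h1 : HasFDerivAt (fun t : (EuclideanSpace ℝ (Fin m)) => ((f (t, (0:ℝ)), t) : (EuclideanSpace ℝ (Fin n)) × (EuclideanSpace ℝ (Fin m))))
        ((Df.comp (ContinuousLinearMap.inl ℝ (EuclideanSpace ℝ (Fin m)) ℝ)).prod (ContinuousLinearMap.id ℝ (EuclideanSpace ℝ (Fin m)))) θ :=
      hf1.prodMk (hasFDerivAt_id θ)
    exact HasFDerivAt.comp (f := fun t => ((f (t, (0:ℝ)), t) : (EuclideanSpace ℝ (Fin n)) × (EuclideanSpace ℝ (Fin m)))) θ (hLout1 _).hasFDerivAt h1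
  -- RHS inner rewrite
  have hRfun : ∀ b : ℝ, fderiv ℝ (fun t => Lin (f (θ, b), t) + b * Lout (f (θ, b), t)) θ
      = ((fderiv ℝ Lin (f (θ, b), θ)) + b • (fderiv ℝ Lout (f (θ, b), θ))).comp
        (ContinuousLinearMap.inr ℝ (EuclideanSpace ℝ (Fin n)) (EuclideanSpace ℝ (Fin m))) := by
    intro b
    have ha : HasFDerivAt (fun t : (EuclideanSpace ℝ (Fin m)) => Lin (f (θ, b), t))
        ((fderiv ℝ Lin (f (θ, b), θ)).comp (ContinuousLinearMap.inr ℝ (EuclideanSpace ℝ (Fin n)) (EuclideanSpace ℝ (Fin m)))) θ :=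
      (hLin1 (f (θ, b), θ)).hasFDerivAt.comp θ (hasFDerivAt_prodMk_right (f (θ, b)) θ)
    have hb : HasFDerivAt (fun t : (EuclideanSpace ℝ (Fin m)) => Lout (f (θ, b), t))
        ((fderiv ℝ Lout (f (θ, b), θ)).comp (ContinuousLinearMap.inr ℝ (EuclideanSpace ℝ (Fin n)) (EuclideanSpace ℝ (Fin m)))) θ :=
      (hLout1 (f (θ, b), θ)).hasFDerivAt.comp θ (hasFDerivAt_prodMk_right (f (θ, b)) θ)
    have h1 : HasFDerivAt (fun t : (EuclideanSpace ℝ (Fin m)) => Lin (f (θ, b), t) + b * Lout (f (θ, b), t))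
        (((fderiv ℝ Lin (f (θ, b), θ)) + b • (fderiv ℝ Lout (f (θ, b), θ))).comp
          (ContinuousLinearMap.inr ℝ (EuclideanSpace ℝ (Fin n)) (EuclideanSpace ℝ (Fin m)))) θ := by
      have := ha.add (hb.const_mul b)
      rw [ContinuousLinearMap.add_comp, ContinuousLinearMap.smul_comp]
      exact this
    exact h1.fderiv
  -- RHS derivative in b
  set Rcomp' : (((EuclideanSpace ℝ (Fin n)) × (EuclideanSpace ℝ (Fin m))) →L[ℝ] ℝ) →L[ℝ] ((EuclideanSpace ℝ (Fin m)) →L[ℝ] ℝ) :=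
    (ContinuousLinearMap.compL ℝ (EuclideanSpace ℝ (Fin m)) ((EuclideanSpace ℝ (Fin n)) × (EuclideanSpace ℝ (Fin m))) ℝ).flip (ContinuousLinearMap.inr ℝ (EuclideanSpace ℝ (Fin n)) (EuclideanSpace ℝ (Fin m))) with hR'_def
  have hγ : HasDerivAt (fun b : ℝ => ((f (θ, b), θ) : (EuclideanSpace ℝ (Fin n)) × (EuclideanSpace ℝ (Fin m)))) ((db, (0:(EuclideanSpace ℝ (Fin m))))) 0 := by
    have h1 : HasDerivAt (fun b : ℝ => ((θ, b) : (EuclideanSpace ℝ (Fin m)) × ℝ)) (((0:(EuclideanSpace ℝ (Fin m))), (1:ℝ))) 0 :=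
      (hasDerivAt_const _ _).prodMk (hasDerivAt_id _)
    have h2 : HasDerivAt (fun b : ℝ => f (θ, b)) db 0 := hDf.comp_hasDerivAt 0 h1
    exact h2.prodMk (hasDerivAt_const _ _)
  have hA : HasDerivAt (fun b : ℝ => fderiv ℝ Lin (f (θ, b), θ)) (S (db, (0:(EuclideanSpace ℝ (Fin m))))) 0 :=
    (hLin2 z₀).hasFDerivAt.comp_hasDerivAt 0 hγ
  have hB : HasDerivAt (fun b : ℝ => fderiv ℝ Lout (f (θ, b), θ))
      (fderiv ℝ (fderiv ℝ Lout) z₀ (db, (0:(EuclideanSpace ℝ (Fin m))))) 0 :=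
    (hLout2 z₀).hasFDerivAt.comp_hasDerivAt 0 hγ
  have hsm : HasDerivAt (fun b : ℝ => b • fderiv ℝ Lout (f (θ, b), θ)) T 0 := by
    have := (hasDerivAt_id (0:ℝ)).smul hB
    simp [z₀] at this; exact this
  have hsum : HasDerivAt
      (fun b : ℝ => fderiv ℝ Lin (f (θ, b), θ) + b • fderiv ℝ Lout (f (θ, b), θ))
      (S (db, (0:(EuclideanSpace ℝ (Fin m)))) + T) 0 := hA.add hsm
  have hRder : HasDerivAt
      (fun b : ℝ => ((fderiv ℝ Lin (f (θ, b), θ)) + b • (fderiv ℝ Lout (f (θ, b), θ))).comp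
        (ContinuousLinearMap.inr ℝ (EuclideanSpace ℝ (Fin n)) (EuclideanSpace ℝ (Fin m))))
      ((S (db, (0:(EuclideanSpace ℝ (Fin m)))) + T).comp (ContinuousLinearMap.inr ℝ (EuclideanSpace ℝ (Fin n)) (EuclideanSpace ℝ (Fin m)))) 0 := by
    have := Rcomp'.hasFDerivAt.comp_hasDerivAt 0 hsum
    convert this using 2
    all_goals rfl
  -- Assemble
  rw [hL.fderiv]
  have hfeq : (fun b : ℝ => fderiv ℝ (fun t => Lin (f (θ, b), t) + b * Lout (f (θ, b), t)) θ)
      = fun b : ℝ => ((fderiv ℝ Lin (f (θ, b), θ)) + b • (fderiv ℝ Lout (f (θ, b), θ))).comp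
        (ContinuousLinearMap.inr ℝ (EuclideanSpace ℝ (Fin n)) (EuclideanSpace ℝ (Fin m))) := funext hRfun
  rw [hfeq, hRder.deriv]
  ext w
  simp only [ContinuousLinearMap.coe_comp', Function.comp_apply,
    ContinuousLinearMap.prod_apply, ContinuousLinearMap.inl_apply,
    ContinuousLinearMap.inr_apply, ContinuousLinearMap.coe_id', id_eq,
    ContinuousLinearMap.add_apply]
  -- Goal: T (Df (w, 0), w) = S (db, 0) (0, w) + T (0, w)
  have hstar1 := star ((w, (0:ℝ)) : (EuclideanSpace ℝ (Fin m)) × ℝ) db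
  have hstar2 := star (((0:(EuclideanSpace ℝ (Fin m))), (1:ℝ)) : (EuclideanSpace ℝ (Fin m)) × ℝ) (Df (w, (0:ℝ)))
  simp only [mul_zero, add_zero, zero_mul, one_mul, mul_one, zero_add] at hstar1 hstar2
  have hTsplit : T ((Df (w, (0:ℝ)) : (EuclideanSpace ℝ (Fin n))), w) = T (Df (w, (0:ℝ)), (0:(EuclideanSpace ℝ (Fin m)))) + T ((0:(EuclideanSpace ℝ (Fin n))), w) := by
    have h : ((Df (w, (0:ℝ)) : (EuclideanSpace ℝ (Fin n))), w) = (Df (w, (0:ℝ)), (0:(EuclideanSpace ℝ (Fin m)))) + ((0:(EuclideanSpace ℝ (Fin n))), w) := by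
      simp [Prod.mk_add_mk]
    rw [h, map_add]
  have hSsplit : S ((Df (w, (0:ℝ)) : (EuclideanSpace ℝ (Fin n))), w) (db, (0:(EuclideanSpace ℝ (Fin m))))
      = S (Df (w, (0:ℝ)), (0:(EuclideanSpace ℝ (Fin m)))) (db, (0:(EuclideanSpace ℝ (Fin m)))) + S ((0:(EuclideanSpace ℝ (Fin n))), w) (db, (0:(EuclideanSpace ℝ (Fin m)))) := by
    have h : ((Df (w, (0:ℝ)) : (EuclideanSpace ℝ (Fin n))), w) = (Df (w, (0:ℝ)), (0:(EuclideanSpace ℝ (Fin m)))) + ((0:(EuclideanSpace ℝ (Fin n))), w) := by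
      simp [Prod.mk_add_mk]
    rw [h, map_add, ContinuousLinearMap.add_apply]
  have hs1 : S (db, (0:(EuclideanSpace ℝ (Fin m)))) ((0:(EuclideanSpace ℝ (Fin n))), w) = S ((0:(EuclideanSpace ℝ (Fin n))), w) (db, (0:(EuclideanSpace ℝ (Fin m)))) := hsymm _ _
  have hs2 : S (Df (w, (0:ℝ)), (0:(EuclideanSpace ℝ (Fin m)))) (db, (0:(EuclideanSpace ℝ (Fin m)))) = S (db, (0:(EuclideanSpace ℝ (Fin m)))) (Df (w, (0:ℝ)), (0:(EuclideanSpace ℝ (Fin m)))) :=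
    hsymm _ _
  linarith [hstar1, hstar2, hTsplit, hSsplit, hs1, hs2]
end

section
/- In the setting of the implicit differentiation error-bound theorem with ‖φ*_θ - φ̂‖ ≤ δ < μ/(2ρ), the proxy vector satisfies ‖∂_φL^out(φ̂, θ)·(∂²_φL^in(φ̂, θ))⁻¹ - π*‖ ≤ (2δ/μ)·(L + Bρ/μ), where π* = ∂_φL^out(φ*_θ, θ)·(∂²_φL^in(φ*_θ, θ))⁻¹. -/
noncomputable def gradPhi11 {n m : ℕ}
    (f : EuclideanSpace ℝ (Fin n) × EuclideanSpace ℝ (Fin m) → ℝ)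
    (φ : EuclideanSpace ℝ (Fin n)) (θ : EuclideanSpace ℝ (Fin m)) :
    EuclideanSpace ℝ (Fin n) →L[ℝ] ℝ :=
  fderiv ℝ (fun ψ => f (ψ, θ)) φ

noncomputable def hess11 {n m : ℕ}
    (f : EuclideanSpace ℝ (Fin n) × EuclideanSpace ℝ (Fin m) → ℝ)
    (φ : EuclideanSpace ℝ (Fin n)) (θ : EuclideanSpace ℝ (Fin m)) :
    EuclideanSpace ℝ (Fin n) →L[ℝ] (EuclideanSpace ℝ (Fin n) →L[ℝ] ℝ) :=
  fderiv ℝ (fun ψ => gradPhi11 f ψ θ) φ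

/-- Bound on the distance between the proxy
`∂_φL^out(φ̂, θ)·(∂²_φL^in(φ̂, θ))⁻¹` and the true `π*`: under strong convexity,
Lipschitz Hessian, `B`-Lipschitzness and `L`-smoothness, if `‖φ*_θ - φ̂‖ ≤ δ < μ/(2ρ)`
then the proxy is within `(2δ/μ)(L + Bρ/μ)` of `π*`. -/
theorem stmt_11 {n m : ℕ}
    (Lin Lout : EuclideanSpace ℝ (Fin n) × EuclideanSpace ℝ (Fin m) → ℝ)
    (hLin : ContDiff ℝ 2 Lin) (hLout : ContDiff ℝ 1 Lout)
    (μ ρ B L : ℝ) (hμ : 0 < μ) (hρ : 0 < ρ) (hB : 0 < B) (hL : 0 < L)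
    (hsc : ∀ φ θ v, μ * ‖v‖ ^ 2 ≤ hess11 Lin φ θ v v)
    (hHlip : ∀ θ φ φ', ‖hess11 Lin φ θ - hess11 Lin φ' θ‖ ≤ ρ * ‖φ - φ'‖)
    (hBlip : ∀ φ θ, ‖gradPhi11 Lout φ θ‖ ≤ B)
    (hsmooth : ∀ θ φ φ', ‖gradPhi11 Lout φ θ - gradPhi11 Lout φ' θ‖ ≤ L * ‖φ - φ'‖)
    (θ : EuclideanSpace ℝ (Fin m)) (φstar φhat : EuclideanSpace ℝ (Fin n))
    (hmin : ∀ ψ, Lin (φstar, θ) ≤ Lin (ψ, θ))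
    (δ : ℝ) (hδpos : 0 < δ) (hδ : δ < μ / (2 * ρ)) (hφ : ‖φstar - φhat‖ ≤ δ)
    (pstar : EuclideanSpace ℝ (Fin n))
    (hpstar : hess11 Lin φstar θ pstar = gradPhi11 Lout φstar θ)
    (q : EuclideanSpace ℝ (Fin n))
    (hq : hess11 Lin φhat θ q = gradPhi11 Lout φhat θ) :
    ‖q - pstar‖ ≤ (2 * δ / μ) * (L + B * ρ / μ) := by
  -- coercivity of the Hessian
  have coer : ∀ (φ : EuclideanSpace ℝ (Fin n)) (v : EuclideanSpace ℝ (Fin n)),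
      μ * ‖v‖ ≤ ‖hess11 Lin φ θ v‖ := by
    intro φ v
    rcases eq_or_ne v 0 with rfl | hv
    · simp
    · have h1 := hsc φ θ v
      have h2 : (hess11 Lin φ θ v) v ≤ ‖hess11 Lin φ θ v‖ * ‖v‖ :=
        le_trans (le_abs_self _) ((hess11 Lin φ θ v).le_opNorm v)
      have hvpos : 0 < ‖v‖ := norm_pos_iff.mpr hv
      have : μ * ‖v‖ * ‖v‖ ≤ ‖hess11 Lin φ θ v‖ * ‖v‖ := by nlinarith
      exact le_of_mul_le_mul_right this hvpos
  set H := hess11 Lin φhat θ with hH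
  set Hs := hess11 Lin φstar θ with hHs
  have hp : ‖pstar‖ ≤ B / μ := by
    have h1 : μ * ‖pstar‖ ≤ ‖Hs pstar‖ := coer φstar pstar
    rw [hpstar] at h1
    have h2 := hBlip φstar θ
    have h3 : μ * ‖pstar‖ ≤ B := h1.trans h2
    rw [le_div_iff₀ hμ]
    linarith
  have key : ‖H (q - pstar)‖ ≤ L * δ + ρ * δ * (B / μ) := by
    have heq : H (q - pstar) =
        (gradPhi11 Lout φhat θ - gradPhi11 Lout φstar θ) - (H - Hs) pstar := by
      simp only [map_sub, hq, ContinuousLinearMap.sub_apply, hpstar]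
      abel
    rw [heq]
    have h1 : ‖gradPhi11 Lout φhat θ - gradPhi11 Lout φstar θ‖ ≤ L * δ := by
      have := hsmooth θ φhat φstar
      have hrev : ‖φhat - φstar‖ ≤ δ := by rwa [norm_sub_rev]
      exact this.trans (mul_le_mul_of_nonneg_left hrev hL.le)
    have h2 : ‖(H - Hs) pstar‖ ≤ ρ * δ * (B / μ) := by
      have hb : ‖(H - Hs) pstar‖ ≤ ‖H - Hs‖ * ‖pstar‖ := (H - Hs).le_opNorm pstar
      have hc : ‖H - Hs‖ ≤ ρ * δ := by
        have := hHlip θ φhat φstar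
        have hrev : ‖φhat - φstar‖ ≤ δ := by rwa [norm_sub_rev]
        exact this.trans (mul_le_mul_of_nonneg_left hrev hρ.le)
      have hnn : (0:ℝ) ≤ ‖pstar‖ := norm_nonneg _
      have hBμ : (0:ℝ) ≤ B / μ := le_of_lt (div_pos hB hμ)
      calc ‖(H - Hs) pstar‖ ≤ ‖H - Hs‖ * ‖pstar‖ := hb
        _ ≤ (ρ * δ) * (B / μ) := by
            exact mul_le_mul hc hp hnn (mul_nonneg hρ.le hδpos.le)
        _ = ρ * δ * (B / μ) := by ring
    calc ‖_ - _‖ ≤ ‖gradPhi11 Lout φhat θ - gradPhi11 Lout φstar θ‖ + ‖(H - Hs) pstar‖ :=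
          norm_sub_le _ _
      _ ≤ L * δ + ρ * δ * (B / μ) := add_le_add h1 h2
  have hcoer := coer φhat (q - pstar)
  have hmain : μ * ‖q - pstar‖ ≤ L * δ + ρ * δ * (B / μ) := le_trans hcoer key
  have hRHS : L * δ + ρ * δ * (B / μ) ≤ μ * ((2 * δ / μ) * (L + B * ρ / μ)) := by
    have hμne : μ ≠ 0 := ne_of_gt hμ
    have heq : μ * ((2 * δ / μ) * (L + B * ρ / μ)) = 2 * δ * L + 2 * δ * (B * ρ / μ) := by
      field_simp
    have heq2 : ρ * δ * (B / μ) = δ * (B * ρ / μ) := by field_simp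
    rw [heq, heq2]
    have h1 : 0 ≤ δ * L := mul_nonneg hδpos.le hL.le
    have h2 : 0 ≤ δ * (B * ρ / μ) :=
      mul_nonneg hδpos.le (div_nonneg (mul_nonneg hB.le hρ.le) hμ.le)
    linarith
  exact le_of_mul_le_mul_left (hmain.trans hRHS) hμ
end

section
/- Let f : ℝ → ℝⁿ be p-times continuously differentiable near 0 and let α ∈ ℝᵖ solve the Vandermonde system ∑_{i=0}^{p-1} α_i·i^k = [k = 1] for k = 0, …, p-1. Then ∑_{i=0}^{p-1} α_i·f(iβ) = β·f'(0) + O(β^p) as β → 0⁺. -/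
open Set Finset

/-- Correctness of the `p`-point forward finite difference estimator: if `f` is C^p
near `0` and `α` solves the Vandermonde system `∑ α_i i^k = [k = 1]`, then
`∑_{i=0}^{p-1} α_i f(iβ) = β f'(0) + O(β^p)` as `β → 0⁺`. -/
theorem stmt_15 {n : ℕ} (p : ℕ) (hp : 1 ≤ p)
    (f : ℝ → EuclideanSpace ℝ (Fin n)) (hf : ContDiffAt ℝ p f 0)
    (α : Fin p → ℝ)
    (hα : ∀ k : Fin p,
      ∑ i : Fin p, α i * ((i : ℕ) : ℝ) ^ (k : ℕ) = if (k : ℕ) = 1 then 1 else 0) :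
    ∃ K β₀ : ℝ, 0 < K ∧ 0 < β₀ ∧ ∀ β : ℝ, 0 < β → β < β₀ →
      ‖(∑ i : Fin p, α i • f (((i : ℕ) : ℝ) * β)) - β • deriv f 0‖ ≤ K * β ^ p := by
  rcases eq_or_lt_of_le hp with h1 | h2
  · -- case p = 1
    subst h1
    have h0 := hα 0
    simp at h0
    refine ⟨‖deriv f 0‖ + 1, 1, by positivity, one_pos, fun β hβ hβ1 => ?_⟩
    have : ∑ i : Fin 1, α i • f (((i : ℕ) : ℝ) * β) = 0 := by
      simp [h0]
    rw [this, zero_sub, norm_neg, norm_smul, Real.norm_eq_abs, abs_of_pos hβ, pow_one]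
    nlinarith [norm_nonneg (deriv f 0), hβ.le]
  · -- case p ≥ 2
    obtain ⟨m, rfl⟩ : ∃ m, p = m + 2 := ⟨p - 2, by omega⟩
    obtain ⟨u, hu, hfu⟩ := hf.contDiffOn (le_refl ((m + 2 : ℕ) : WithTop ℕ∞))
      (fun h => False.elim (by
        have h1 : (((m + 2 : ℕ) : ℕ∞) : WithTop ℕ∞) = ((⊤ : ℕ∞) : WithTop ℕ∞) := h
        exact WithTop.natCast_ne_top (m + 2) (WithTop.coe_inj.mp h1)))
    obtain ⟨ε, hε, hball⟩ := Metric.mem_nhds_iff.mp hu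
    set r : ℝ := ε / 2 with hr_def
    have hr : 0 < r := by positivity
    have hsub : Icc (0:ℝ) r ⊆ u := by
      intro x hx
      apply hball
      simp only [Metric.mem_ball, Real.dist_eq, sub_zero]
      rw [abs_of_nonneg hx.1]
      linarith [hx.2]
    have hfs : ContDiffOn ℝ (m + 2 : ℕ) f (Icc 0 r) := hfu.mono hsub
    have hud : UniqueDiffOn ℝ (Icc (0:ℝ) r) := uniqueDiffOn_Icc hr
    have h0mem : (0:ℝ) ∈ Icc (0:ℝ) r := ⟨le_rfl, hr.le⟩
    -- bound on the top derivative
    have hcont : ContinuousOn (iteratedDerivWithin (m + 2) f (Icc 0 r)) (Icc 0 r) :=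
      hfs.continuousOn_iteratedDerivWithin (by exact_mod_cast le_refl _) hud
    obtain ⟨C, hC⟩ := isCompact_Icc.exists_bound_of_continuousOn hcont
    set C' : ℝ := max C 0 with hC'
    have hC'0 : 0 ≤ C' := le_max_right _ _
    have hCb : ∀ y ∈ Icc (0:ℝ) r, ‖iteratedDerivWithin (m + 2) f (Icc 0 r) y‖ ≤ C' :=
      fun y hy => (hC y hy).trans (le_max_left _ _)
    set M : ℝ := C' * ((m : ℝ) + 2) ^ (m + 2) / (Nat.factorial (m+1) : ℝ) with hM
    have hM0 : 0 ≤ M := by positivity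
    refine ⟨(∑ i : Fin (m + 2), |α i|) * M + 1, r / (m + 2), by positivity, by positivity,
      fun β hβ hβ' => ?_⟩
    have hβr : β * ((m:ℝ) + 2) < r := by
      rw [lt_div_iff₀ (by positivity)] at hβ'
      linarith
    have hile : ∀ i : Fin (m + 2), ((i : ℕ) : ℝ) ≤ (m : ℝ) + 2 := by
      intro i
      have h1 : ((i : ℕ) : ℝ) ≤ ((m + 2 : ℕ) : ℝ) := by exact_mod_cast Nat.le_of_lt i.2
      push_cast at h1
      linarith
    have hmem : ∀ i : Fin (m + 2), ((i : ℕ) : ℝ) * β ∈ Icc (0:ℝ) r := by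
      intro i
      refine ⟨by positivity, ?_⟩
      have := hile i
      nlinarith
    set T : ℝ → EuclideanSpace ℝ (Fin n) :=
      fun x => taylorWithinEval f (m + 1) (Icc 0 r) 0 x with hT
    -- Taylor remainder bound
    have htay : ∀ i : Fin (m + 2), ‖f (((i : ℕ) : ℝ) * β) - T (((i : ℕ) : ℝ) * β)‖ ≤
        M * β ^ (m + 2) := by
      intro i
      have hb := taylor_mean_remainder_bound (n := m + 1) hr.le hfs (hmem i) hCb
      rw [sub_zero] at hb
      refine hb.trans ?_
      have hiβ : ((i:ℕ):ℝ) * β ≤ ((m:ℝ)+2) * β := by nlinarith [hile i]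
      have hpow : (((i:ℕ):ℝ) * β) ^ (m+2) ≤ (((m:ℝ)+2) * β) ^ (m+2) :=
        pow_le_pow_left₀ (by positivity) hiβ _
      calc C' * (((i:ℕ):ℝ)*β)^(m+1+1) / (Nat.factorial (m+1):ℝ)
          ≤ C' * ((((m:ℝ)+2)*β)^(m+2)) / (Nat.factorial (m+1):ℝ) := by
            gcongr
        _ = M * β^(m+2) := by rw [hM, mul_pow]; ring
    -- Taylor polynomial identity
    have hD1 : iteratedDerivWithin 1 f (Icc (0:ℝ) r) 0 = deriv f 0 := by
      rw [iteratedDerivWithin_one]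
      exact (hf.differentiableAt (by simp)).derivWithin (hud 0 h0mem)
    have hTsum : ∑ i : Fin (m + 2), α i • T (((i : ℕ) : ℝ) * β) = β • deriv f 0 := by
      simp only [hT, taylor_within_apply]
      simp_rw [Finset.smul_sum, smul_smul]
      rw [Finset.sum_comm]
      have key : ∀ k ∈ Finset.range (m + 1 + 1),
          (∑ i : Fin (m+2), (α i * (((Nat.factorial k : ℝ))⁻¹ * (((i:ℕ):ℝ)*β - 0)^k)) •
            iteratedDerivWithin k f (Icc 0 r) 0)
          = (if k = 1 then β else 0) • iteratedDerivWithin k f (Icc 0 r) 0 := by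
        intro k hk
        rw [← Finset.sum_smul]
        congr 1
        have hv : ∑ i : Fin (m+2), α i * ((i:ℕ):ℝ)^k = if k = 1 then 1 else 0 :=
          hα ⟨k, Finset.mem_range.mp hk⟩
        simp only [sub_zero]
        calc ∑ i : Fin (m+2), α i * (((Nat.factorial k : ℝ))⁻¹ * (((i:ℕ):ℝ)*β)^k)
            = (∑ i : Fin (m+2), α i * ((i:ℕ):ℝ)^k) * (β^k / (Nat.factorial k : ℝ)) := by
              rw [Finset.sum_mul]
              refine Finset.sum_congr rfl fun i _ => ?_
              rw [mul_pow]; ring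
          _ = (if k = 1 then 1 else 0) * (β^k / (Nat.factorial k : ℝ)) := by rw [hv]
          _ = if k = 1 then β else 0 := by
              split
              · rename_i h; subst h; simp [Nat.factorial]
              · simp
      rw [Finset.sum_congr rfl key]
      simp only [ite_smul, zero_smul]
      rw [Finset.sum_ite_eq' (Finset.range (m + 1 + 1)) 1
        (fun k => β • iteratedDerivWithin k f (Icc (0:ℝ) r) 0)]
      simp only [Finset.mem_range, if_pos (by omega : 1 < m + 1 + 1), hD1]
    -- assemble
    have heq : (∑ i : Fin (m + 2), α i • f (((i : ℕ) : ℝ) * β)) - β • deriv f 0 =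
        ∑ i : Fin (m + 2), α i • (f (((i : ℕ) : ℝ) * β) - T (((i : ℕ) : ℝ) * β)) := by
      rw [← hTsum, ← Finset.sum_sub_distrib]
      exact Finset.sum_congr rfl fun i _ => (smul_sub _ _ _).symm
    rw [heq]
    calc ‖∑ i : Fin (m + 2), α i • (f (((i : ℕ) : ℝ) * β) - T (((i : ℕ) : ℝ) * β))‖
        ≤ ∑ i : Fin (m + 2), ‖α i • (f (((i : ℕ) : ℝ) * β) - T (((i : ℕ) : ℝ) * β))‖ :=
          norm_sum_le _ _
      _ ≤ ∑ i : Fin (m + 2), |α i| * (M * β ^ (m + 2)) := by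
          refine Finset.sum_le_sum fun i _ => ?_
          rw [norm_smul, Real.norm_eq_abs]
          exact mul_le_mul_of_nonneg_left (htay i) (abs_nonneg _)
      _ = (∑ i : Fin (m + 2), |α i|) * M * β ^ (m + 2) := by
          rw [← Finset.sum_mul]; ring
      _ ≤ ((∑ i : Fin (m + 2), |α i|) * M + 1) * β ^ (m + 2) := by
          have hb2 : (0:ℝ) < β ^ (m + 2) := by positivity
          nlinarith
end
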